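/- Let L be a nonzero matrix moment functional on E with L(f)L(g) = L(g)L(f) for all f,g ∈ E. Then there exist a unitary matrix U ∈ M_q(ℂ) and scalar moment functionals l₁,…,l_q on E such that L(f) = U*·diag(l₁(f),…,l_q(f))·U for all f ∈ E. -/

import Mathlib

open Matrix
open scoped ComplexOrder

variable {X : Type*} {q : ℕ}

/-- `μ` is a (finitely atomic) representing measure of the linear map `L : E → H_q`:
all masses are positive semidefinite and `L(f) = ∫ f dμ = ∑_x f(x) μ({x})`. -/
def IsMatRepMeasure (E : Submodule ℝ (X → ℝ)) (L : E →ₗ[ℝ] Matrix (Fin q) (Fin q) ℂ)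
    (μ : X →₀ Matrix (Fin q) (Fin q) ℂ) : Prop :=
  (∀ x, (μ x).PosSemidef) ∧ ∀ f : E, L f = μ.sum fun x M => ((f : X → ℝ) x) • M

/-- `l : E → ℝ` is a scalar moment functional:  it has a finitely atomic representing measure
with nonnegative masses. -/
def IsScalarMomentFunctional (E : Submodule ℝ (X → ℝ)) (l : E →ₗ[ℝ] ℝ) : Prop :=
  ∃ w : X →₀ ℝ, (∀ x, 0 ≤ w x) ∧ ∀ f : E, l f = w.sum fun x c => (f : X → ℝ) x * c


open Module.End in
private lemma aux_joint_eigenbasis {𝕜 F : Type*} [RCLike 𝕜] [NormedAddCommGroup F]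
    [InnerProductSpace 𝕜 F] [FiniteDimensional 𝕜 F] {n q : ℕ} (hq : Module.finrank 𝕜 F = q)
    (T : Fin n → Module.End 𝕜 F) (hsymm : ∀ i, (T i).IsSymmetric)
    (hTcomm : Pairwise (Function.onFun Commute T)) :
    ∃ B : OrthonormalBasis (Fin q) 𝕜 F, ∃ χ : Fin q → Fin n → 𝕜,
      ∀ j i, T i (B j) = χ j i • B j := by
  classical
  set V : (Fin n → 𝕜) → Submodule 𝕜 F :=
    fun χ => ⨅ i, eigenspace (T i) (χ i) with hVdef
  haveI : Fintype {χ : Fin n → 𝕜 // V χ ≠ ⊥} := by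
    apply Fintype.ofInjective (β := ∀ i, (T i).Eigenvalues)
      (fun χ i => ⟨χ.1 i, fun h => χ.2
        (le_bot_iff.mp (le_trans (iInf_le _ i) (le_of_eq h)))⟩)
    intro χ₁ χ₂ h
    ext i
    exact congr_arg Subtype.val (congr_fun h i)
  have hOrth : OrthogonalFamily 𝕜 (fun χ : {χ : Fin n → 𝕜 // V χ ≠ ⊥} => ↥(V χ.1))
      (fun χ => (V χ.1).subtypeₗᵢ) :=
    (LinearMap.IsSymmetric.orthogonalFamily_iInf_eigenspaces hsymm).comp Subtype.val_injective
  have hV : DirectSum.IsInternal (fun χ : {χ : Fin n → 𝕜 // V χ ≠ ⊥} => V χ.1) := by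
    rw [hOrth.isInternal_iff]
    rw [show (⨆ χ : {χ : Fin n → 𝕜 // V χ ≠ ⊥}, V χ.1) = ⨆ χ, V χ from iSup_ne_bot_subtype V]
    rw [show (⨆ χ, V χ) = ⊤ from
      LinearMap.IsSymmetric.iSup_iInf_eq_top_of_commute hsymm hTcomm,
      Submodule.top_orthogonal_eq_bot]
  refine ⟨hV.subordinateOrthonormalBasis hq hOrth,
    fun j => (hV.subordinateOrthonormalBasisIndex hq j hOrth).1, fun j i => ?_⟩
  have hmem := hV.subordinateOrthonormalBasis_subordinate hq j hOrth
  exact mem_eigenspace_iff.mp ((Submodule.mem_iInf _).mp hmem i)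

private lemma aux_toEuclideanLin_mul {q : ℕ} (A B : Matrix (Fin q) (Fin q) ℂ) :
    Matrix.toEuclideanLin (A * B) = Matrix.toEuclideanLin A * Matrix.toEuclideanLin B := by
  rw [Matrix.toEuclideanLin_eq_toLin,
    Matrix.toLin_mul (PiLp.basisFun 2 ℂ (Fin q)) (PiLp.basisFun 2 ℂ (Fin q)) _]
  rfl

private lemma aux_simul_diag {q n : ℕ} (A : Fin n → Matrix (Fin q) (Fin q) ℂ)
    (hherm : ∀ i, (A i).IsHermitian)
    (hcomm : ∀ i j, A i * A j = A j * A i) :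
    ∃ W ∈ Matrix.unitaryGroup (Fin q) ℂ, ∃ χ : Fin q → Fin n → ℂ,
      ∀ i, star W * A i * W = Matrix.diagonal (fun j => χ j i) := by
  classical
  obtain ⟨B, χ, heig⟩ := aux_joint_eigenbasis (q := q) (F := EuclideanSpace ℂ (Fin q))
    finrank_euclideanSpace_fin (fun i => Matrix.toEuclideanLin (A i))
    (fun i => Matrix.isHermitian_iff_isSymmetric.mp (hherm i))
    (fun i j _ => by
      show _ * _ = _ * _
      simp only [← aux_toEuclideanLin_mul, hcomm i j])
  set W : Matrix (Fin q) (Fin q) ℂ :=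
    (EuclideanSpace.basisFun (Fin q) ℂ).toBasis.toMatrix B.toBasis with hW
  have hWu : W ∈ Matrix.unitaryGroup (Fin q) ℂ :=
    (EuclideanSpace.basisFun (Fin q) ℂ).toMatrix_orthonormalBasis_mem_unitary B
  refine ⟨W, hWu, χ, fun i => ?_⟩
  have hWmul : ∀ j, W *ᵥ Pi.single j 1 = ⇑(B j) := by
    intro j
    have : ∀ a, W a j = B j a := fun a => rfl
    simp only [Matrix.mulVec_single, mul_one, MulOpposite.op_one, one_smul]
    exact funext this
  have hWstar : ∀ j, (star W) *ᵥ ⇑(B j) = Pi.single j 1 := by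
    intro j
    rw [← hWmul, Matrix.mulVec_mulVec]
    rw [show star W * W = 1 from (Matrix.mem_unitaryGroup_iff'.mp hWu), Matrix.one_mulVec]
  have hAmul : ∀ j, A i *ᵥ ⇑(B j) = χ j i • ⇑(B j) := by
    intro j
    simpa only [Matrix.toEuclideanLin_apply, WithLp.ofLp_smul] using congr(⇑$(heig j i))
  apply Matrix.toEuclideanLin.injective
  apply Module.Basis.ext (EuclideanSpace.basisFun (Fin q) ℂ).toBasis
  intro j
  simp only [Matrix.toEuclideanLin_apply, OrthonormalBasis.coe_toBasis,
    EuclideanSpace.basisFun_apply, PiLp.ofLp_single, ← Matrix.mulVec_mulVec,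
    hWmul, hAmul, Matrix.diagonal_mulVec_single, Matrix.mulVec_smul, hWstar,
    mul_one]
  apply PiLp.ext
  intro a
  simp only [PiLp.toLp_apply, Pi.smul_apply, Pi.single_apply, smul_eq_mul, mul_ite, mul_one, mul_zero]

/-- A nonzero matrix moment functional `L` on `E` with `L(f)L(g) = L(g)L(f)` for all
`f, g ∈ E` is diagonalizable:  there exist a unitary `U` and scalar moment functionals
`l₁, …, l_q` with `L(f) = U* · diag(l₁(f),…,l_q(f)) · U` for all `f ∈ E`. -/
theorem commutative_matMomentFunctional_diagonalizable (E : Submodule ℝ (X → ℝ))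
    (hfin : FiniteDimensional ℝ E)
    (L : E →ₗ[ℝ] Matrix (Fin q) (Fin q) ℂ)
    (hL : ∃ μ, IsMatRepMeasure E L μ) (hL0 : L ≠ 0)
    (hcomm : ∀ f g : E, L f * L g = L g * L f) :
    ∃ U ∈ Matrix.unitaryGroup (Fin q) ℂ, ∃ l : Fin q → (E →ₗ[ℝ] ℝ),
      (∀ r, IsScalarMomentFunctional E (l r)) ∧
      ∀ f : E, L f = Uᴴ * Matrix.diagonal (fun r => (l r f : ℂ)) * U := by
  
  classical
  haveI := hfin
  obtain ⟨μ, hμpos, hμrep⟩ := hL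
  -- every L f is Hermitian
  have hherm : ∀ f : E, (L f).IsHermitian := by
    intro f
    rw [hμrep f, Finsupp.sum]
    apply Finset.sum_induction _ _ (fun a b ha hb => ha.add hb) Matrix.isHermitian_zero
    intro x _
    have hM := (hμpos x).1
    unfold Matrix.IsHermitian at hM ⊢
    rw [Matrix.conjTranspose_smul, star_trivial, hM]
  set n := Module.finrank ℝ E with hn
  set b : Module.Basis (Fin n) ℝ E := Module.finBasis ℝ E with hb
  obtain ⟨W, hWu, χ, hdiag⟩ := aux_simul_diag (fun i => L (b i)) (fun i => hherm (b i))
    (fun i j => hcomm (b i) (b j))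
  -- the joint eigenvalues are real
  have hreal : ∀ j i, ((χ j i).re : ℂ) = χ j i := by
    intro j i
    have h1 : (Matrix.diagonal (fun j => χ j i)).IsHermitian := by
      rw [← hdiag i]
      have h2 := hherm (b i)
      unfold Matrix.IsHermitian at h2 ⊢
      rw [Matrix.star_eq_conjTranspose, Matrix.conjTranspose_mul, Matrix.conjTranspose_mul,
        Matrix.conjTranspose_conjTranspose, h2, Matrix.mul_assoc]
    have h3 := congr_fun (congr_fun ((Matrix.diagonal_conjTranspose _).symm.trans h1) j) j
    simp only [Matrix.diagonal_apply_eq, Pi.star_apply] at h3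
    exact Complex.conj_eq_iff_re.mp h3
  -- the scalar functionals
  set l : Fin q → (E →ₗ[ℝ] ℝ) := fun j => ∑ i, (χ j i).re • b.coord i with hl
  -- the entry linear map
  set Φ : Fin q → (Matrix (Fin q) (Fin q) ℂ →ₗ[ℝ] ℂ) := fun j =>
    { toFun := fun M => (star W * M * W) j j
      map_add' := by intros; simp [Matrix.mul_add, Matrix.add_mul]
      map_smul' := by intros; simp [Matrix.mul_smul, Matrix.smul_mul] } with hΦ
  -- L f is diagonalized by W with diagonal entries l j f
  have key : ∀ f : E, star W * L f * W = Matrix.diagonal (fun j => ((l j f : ℝ) : ℂ)) := by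
    intro f
    have hf : L f = ∑ i, b.repr f i • L (b i) := by
      conv_lhs => rw [← Module.Basis.sum_repr b f, map_sum]
      simp [_root_.map_smul]
    rw [hf, Finset.mul_sum, Finset.sum_mul]
    have : ∀ i ∈ Finset.univ, star W * (b.repr f i • L (b i)) * W
        = Matrix.diagonal (fun j => b.repr f i • χ j i) := by
      intro i _
      rw [mul_smul_comm, smul_mul_assoc, hdiag i]
      ext a c
      by_cases h : a = c <;> simp [Matrix.diagonal, h]
    rw [Finset.sum_congr rfl this]
    ext a c
    by_cases h : a = c
    · subst h
      simp only [Matrix.sum_apply, Matrix.diagonal_apply_eq, hl]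
      rw [show ((∑ i, (χ a i).re • b.coord i) f : ℝ) = ∑ i, (χ a i).re * b.repr f i by
        simp [LinearMap.sum_apply, Module.Basis.coord_apply]]
      push_cast
      refine Finset.sum_congr rfl fun i _ => ?_
      rw [Complex.real_smul, hreal a i]
      ring
    · simp [Matrix.sum_apply, Matrix.diagonal_apply_ne _ h]
  -- scalar moment functionals
  have hmom : ∀ j, IsScalarMomentFunctional E (l j) := by
    intro j
    refine ⟨μ.mapRange (fun M => ((star W * M * W) j j).re) (by simp), fun x => ?_, fun f => ?_⟩
    · rw [Finsupp.mapRange_apply]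
      have hpsd : (Wᴴ * μ x * W).PosSemidef := (hμpos x).conjTranspose_mul_mul_same W
      rw [Matrix.star_eq_conjTranspose]
      have h0 := hpsd.dotProduct_mulVec_nonneg (Pi.single j 1)
      simp only [Matrix.mulVec_single, mul_one, dotProduct, Pi.star_apply,
        Pi.single_apply, apply_ite (star : ℂ → ℂ), star_one, star_zero, ite_mul, one_mul,
        zero_mul, Finset.sum_ite_eq', Finset.mem_univ, if_true, MulOpposite.op_one, one_smul] at h0
      exact (Complex.nonneg_iff.mp h0).1
    · have h1 : ((l j f : ℝ) : ℂ) = Φ j (L f) := by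
        rw [show Φ j (L f) = (star W * L f * W) j j from rfl, key f]; simp
      have h2 : Φ j (L f) = μ.sum fun x M => ((f : X → ℝ) x) • Φ j M := by
        rw [hμrep f, map_finsuppSum]
        exact Finsupp.sum_congr fun x _ => (Φ j).map_smul _ _
      have h3 : l j f = μ.sum fun x M => (f : X → ℝ) x * (Φ j M).re := by
        have := congrArg Complex.re (h1.trans h2)
        rw [Complex.ofReal_re] at this
        rw [this, Finsupp.sum, Finsupp.sum, Complex.re_sum]
        exact Finset.sum_congr rfl fun x _ => by rw [Complex.smul_re, smul_eq_mul]
      rw [h3, Finsupp.sum_mapRange_index (fun a => by simp)]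
      rfl
  -- assemble the result
  have hWW : W * star W = 1 := Matrix.mem_unitaryGroup_iff.mp hWu
  have hWW' : star W * W = 1 := Matrix.mem_unitaryGroup_iff'.mp hWu
  refine ⟨star W, ?_, l, hmom, fun f => ?_⟩
  · exact Matrix.mem_unitaryGroup_iff.mpr (by rw [star_star]; exact hWW')
  · have hinv : W * (star W * L f * W) * star W = L f := by
      simp only [← Matrix.mul_assoc]
      rw [hWW, Matrix.one_mul, Matrix.mul_assoc, hWW, Matrix.mul_one]
    rw [show (star W)ᴴ = W by rw [← Matrix.star_eq_conjTranspose, star_star], ← key f, hinv]
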